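/- For 2 ≤ k ≤ n-2, let T_{k,n} be a snake (zig-zag) triangulation of the convex n-gon, and let C_k(T_{k,n}) be the set of k-subsets of [n] that are disjoint unions of exactly two cyclic intervals whose starting points form a chord of T_{k,n}. Then C_k(T_{k,n}) consists of (k-1)(n-k-1) pairwise non-crossing k-subsets of [n]. -/

import Mathlib

/-- The position of `x` in the cyclic order on `ℤ/n` starting at `i`. -/
def ord {n : ℕ} (i x : ZMod n) : ℕ := (x - i).val

/-- Two finite sets of naturals intertwine: they have the same cardinality and their
sorted elements satisfy `a₁ < b₁ < a₂ < b₂ < ⋯ < a_l < b_l`. -/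
def NatIntertwines (A B : Finset ℕ) : Prop :=
  A.card = B.card ∧
    List.Chain' (· < ·)
      (((A.sort (· ≤ ·)).zip (B.sort (· ≤ ·))).flatMap fun p => [p.1, p.2])

/-- Two finite subsets of `ℤ/n` intertwine under some cyclic ordering of `[n]`. -/
def CycIntertwines {n : ℕ} (A B : Finset (ZMod n)) : Prop :=
  ∃ i : ZMod n, NatIntertwines (A.image (ord i)) (B.image (ord i))

/-- Two subsets `I`, `J` of `ℤ/n` are (cyclically) `l`-intertwining: there are
`l`-subsets `I' ⊆ I \ J` and `J' ⊆ J \ I` which intertwine (in either order) under some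
cyclic ordering. -/
def CycLIntertwines {n : ℕ} (l : ℕ) (I J : Finset (ZMod n)) : Prop :=
  ∃ I' J' : Finset (ZMod n), I' ⊆ I \ J ∧ J' ⊆ J \ I ∧ I'.card = l ∧ J'.card = l ∧
    (CycIntertwines I' J' ∨ CycIntertwines J' I')

/-- The set of left endpoints of `S ⊆ ℤ/n`: elements of `S` whose predecessor is not
in `S`. -/
def leftEnd {n : ℕ} (S : Finset (ZMod n)) : Finset (ZMod n) :=
  S.filter fun x => x - 1 ∉ S

/-- The gap vector of a sorted list of positions: consecutive differences minus 2,
cyclically (arithmetic modulo `n`). -/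
def phiList (n : ℕ) (L : List ℕ) : List ℕ :=
  (L.zip (L.rotate 1)).map fun p => (p.2 + n - p.1 - 2) % n

/-- The map `φᵢ` of Definition 3.4: the gap vector of an `l`-subset of `ℤ/n`, listed in
the cyclic order starting at `i`. -/
def phi {n : ℕ} (i : ZMod n) (T : Finset (ZMod n)) : List ℕ :=
  phiList n ((T.image (ord i)).sort (· ≤ ·))

/-- A slice: a non-intertwining collection of `C(n-l-1, l-1)` `l`-subsets of `ℤ/n`, each
with cyclic gaps at least 2, such that for some `i` the gap-vector map `φᵢ` is a bijection
onto the `l`-tuples of nonnegative integers summing to `n - 2l`. -/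
def IsSlice (n l : ℕ) (𝒯 : Finset (Finset (ZMod n))) : Prop :=
  𝒯.card = (n - l - 1).choose (l - 1) ∧
    (∀ T ∈ 𝒯, T.card = l) ∧
    (∀ T ∈ 𝒯, ∀ x ∈ T, x + 1 ∉ T) ∧
    (∀ T ∈ 𝒯, ∀ T' ∈ 𝒯, ¬ CycIntertwines T T') ∧
    ∃ i : ZMod n, Set.BijOn (phi i) ↑𝒯
      {L : List ℕ | L.length = l ∧ L.sum = n - 2 * l}

/-- `C_k(𝒯)`: the `k`-subsets of `ℤ/n` which are `l`-ple intervals whose set of left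
endpoints belongs to `𝒯`. -/
def Ck (n k : ℕ) (𝒯 : Finset (Finset (ZMod n))) : Set (Finset (ZMod n)) :=
  {S : Finset (ZMod n) | S.card = k ∧ leftEnd S ∈ 𝒯}

set_option linter.unusedSectionVars false

section OrdLemmas
variable {n : ℕ} [NeZero n]

lemma ord_lt (i x : ZMod n) : ord i x < n := ZMod.val_lt _

lemma ord_inj {i x y : ZMod n} (h : ord i x = ord i y) : x = y := by
  have h2 := ZMod.val_injective n h
  have h3 : x - i + i = y - i + i := by rw [h2]
  simpa using h3

lemma ord_self (i : ZMod n) : ord i i = 0 := by simp [ord]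

lemma ord_eq_zero_iff {i x : ZMod n} : ord i x = 0 ↔ x = i := by
  constructor
  · intro h; exact ord_inj (by rw [h, ord_self])
  · rintro rfl; exact ord_self _

lemma ord_add_cast (i : ZMod n) {t : ℕ} (ht : t < n) : ord i (i + (t : ZMod n)) = t := by
  simp only [ord, add_sub_cancel_left]
  exact ZMod.val_cast_of_lt ht

lemma add_ord_cast (i x : ZMod n) : i + ((ord i x : ℕ) : ZMod n) = x := by
  simp [ord, ZMod.natCast_val, ZMod.cast_id]

/-- cocycle : ord i x = (ord i y + ord y x) % n -/
lemma ord_cocycle (i x y : ZMod n) : ord i x = (ord i y + ord y x) % n := by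
  have h1 : x - i = (y - i) + (x - y) := by ring
  rw [ord, h1, ZMod.val_add]; rfl

lemma ord_rev {x y : ZMod n} (h : x ≠ y) : ord y x = n - ord x y := by
  have h0 := ord_cocycle x x y
  rw [ord_self] at h0
  have h1 : ord x y ≠ 0 := fun hc => h (ord_inj (by rw [hc, ord_self])).symm
  have h2 : ord y x ≠ 0 := fun hc => h.symm (ord_inj (by rw [hc, ord_self]))
  have h3 := ord_lt x y; have h4 := ord_lt y x
  rcases Nat.lt_or_ge (ord x y + ord y x) n with hlt | hge
  · rw [Nat.mod_eq_of_lt hlt] at h0; omega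
  · have h5 : ord x y + ord y x - n < n := by omega
    have h6 : (ord x y + ord y x) % n = ord x y + ord y x - n := by
      rw [Nat.mod_eq_sub_mod hge, Nat.mod_eq_of_lt h5]
    omega

lemma ord_sub_of_le {i x y : ZMod n} (h : ord i y ≤ ord i x) : ord y x = ord i x - ord i y := by
  rcases eq_or_ne x y with rfl | hxy
  · simp [ord_self]
  rcases eq_or_ne y i with rfl | hyi
  · simp [ord_self]
  have h0 := ord_cocycle i x y
  have h3 := ord_lt i x; have h4 := ord_lt i y; have h5 := ord_lt y x
  have h2 : ord y x ≠ 0 := fun hc => hxy (ord_inj (i := y) (by rw [hc, ord_self]))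
  rcases Nat.lt_or_ge (ord i y + ord y x) n with hlt | hge
  · rw [Nat.mod_eq_of_lt hlt] at h0; omega
  · have h6 : (ord i y + ord y x) % n = ord i y + ord y x - n := by
      rw [Nat.mod_eq_sub_mod hge, Nat.mod_eq_of_lt (by omega)]
    omega

lemma ord_add_of_lt {i x y : ZMod n} (h : ord i y + ord y x < n) :
    ord i x = ord i y + ord y x := by
  rw [ord_cocycle i x y, Nat.mod_eq_of_lt h]

end OrdLemmas

section Walk
variable {n : ℕ} [NeZero n]

lemma mem_leftEnd_iff {S : Finset (ZMod n)} {x : ZMod n} :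
    x ∈ leftEnd S ↔ x ∈ S ∧ x - 1 ∉ S := by simp [leftEnd]

open Classical in
lemma walk {S : Finset (ZMod n)} {q p : ZMod n} (hq : q ∉ S) (hp : p ∈ S) :
    ∃ t ∈ leftEnd S, 1 ≤ ord q t ∧ ord q t ≤ ord q p ∧
      ∀ m, ord q t ≤ m → m ≤ ord q p → q + (m : ZMod n) ∈ S := by
  set B := ord q p with hB
  have hpq : p ≠ q := fun h => hq (h ▸ hp)
  have hB1 : 1 ≤ B := by
    rcases Nat.eq_zero_or_pos B with h | h
    · exact absurd (ord_eq_zero_iff.mp h) hpq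
    · exact h
  have hBlt : B < n := ord_lt q p
  set P : ℕ → Prop := fun c => 1 ≤ c ∧ c ≤ B ∧ ∀ m, c ≤ m → m ≤ B → q + (m : ZMod n) ∈ S
    with hP
  have hex : ∃ c, P c := by
    refine ⟨B, hB1, le_refl _, fun m h1 h2 => ?_⟩
    have : m = B := le_antisymm h2 h1
    subst this
    rw [hB, add_ord_cast]; exact hp
  set c := Nat.find hex with hc
  obtain ⟨hc1, hcB, hcP⟩ : P c := Nat.find_spec hex
  have hclt : c < n := lt_of_le_of_lt hcB hBlt
  refine ⟨q + (c : ZMod n), ?_, ?_, ?_, ?_⟩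
  · rw [mem_leftEnd_iff]
    refine ⟨hcP c (le_refl _) hcB, ?_⟩
    have hsub : q + (c : ZMod n) - 1 = q + ((c - 1 : ℕ) : ZMod n) := by
      have : ((c - 1 : ℕ) : ZMod n) = (c : ZMod n) - 1 := by
        push_cast [Nat.cast_sub hc1]; ring
      rw [this]; ring
    rw [hsub]
    rcases Nat.lt_or_ge 1 c with h1 | h1
    · -- c ≥ 2 : minimality
      have hmin := Nat.find_min hex (m := c - 1) (by omega)
      simp only [hP] at hmin
      push_neg at hmin
      intro hcon
      obtain ⟨m, hm1, hm2, hm3⟩ := hmin (by omega) (by omega)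
      rcases Nat.eq_or_lt_of_le hm1 with h | h
      · exact hm3 (h ▸ hcon)
      · exact hm3 (hcP m (by omega) hm2)
    · have : c = 1 := le_antisymm (by omega) hc1
      rw [this]; simpa using hq
  · rw [ord_add_cast q hclt]; exact hc1
  · rw [ord_add_cast q hclt]; exact hcB
  · rw [ord_add_cast q hclt]; exact hcP

end Walk

def Ival {n : ℕ} (x : ZMod n) (a : ℕ) : Finset (ZMod n) :=
  (Finset.range a).image (fun (t : ℕ) => x + (t : ZMod n))

section Ival
variable {n : ℕ} [NeZero n]

lemma mem_Ival_iff {a : ℕ} (ha : a ≤ n) {x z : ZMod n} : z ∈ Ival x a ↔ ord x z < a := by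
  constructor
  · rintro hz
    simp only [Ival, Finset.mem_image, Finset.mem_range] at hz
    obtain ⟨t, ht, rfl⟩ := hz
    rw [ord_add_cast x (lt_of_lt_of_le ht ha)]; exact ht
  · intro h
    simp only [Ival, Finset.mem_image, Finset.mem_range]
    exact ⟨ord x z, h, add_ord_cast x z⟩

lemma card_Ival {a : ℕ} (ha : a ≤ n) (x : ZMod n) : (Ival x a).card = a := by
  rw [Ival, Finset.card_image_of_injOn, Finset.card_range]
  intro s hs t ht hst
  simp only [Finset.mem_coe, Finset.mem_range] at hs ht
  simp only at hst
  have h2 : ord x (x + (s : ZMod n)) = ord x (x + (t : ZMod n)) := by rw [hst]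
  rwa [ord_add_cast x (lt_of_lt_of_le hs ha), ord_add_cast x (lt_of_lt_of_le ht ha)] at h2

lemma Ival_subset {a : ℕ} {x : ZMod n} {S : Finset (ZMod n)}
    (h : ∀ t : ℕ, t < a → x + (t : ZMod n) ∈ S) : Ival x a ⊆ S := by
  intro z hz
  simp only [Ival, Finset.mem_image, Finset.mem_range] at hz
  obtain ⟨t, ht, rfl⟩ := hz
  exact h t ht

lemma mem_Ival_self {a : ℕ} (h : 1 ≤ a) (x : ZMod n) : x ∈ Ival x a := by
  simp only [Ival, Finset.mem_image, Finset.mem_range]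
  exact ⟨0, h, by simp⟩

open Classical in
lemma exists_gap {S : Finset (ZMod n)} (hS : S.card < n) {x : ZMod n} (hx : x ∈ S) :
    ∃ a, 1 ≤ a ∧ a < n ∧ Ival x a ⊆ S ∧ x + (a : ZMod n) ∉ S := by
  obtain ⟨w, hw⟩ : ∃ w, w ∉ S := by
    by_contra h
    push_neg at h
    have h2 : S = Finset.univ := Finset.eq_univ_iff_forall.mpr h
    rw [h2, Finset.card_univ, ZMod.card] at hS
    omega
  have hwx : w ≠ x := fun h => hw (h ▸ hx)
  have hex : ∃ t : ℕ, 1 ≤ t ∧ x + (t : ZMod n) ∉ S := by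
    refine ⟨ord x w, ?_, by rw [add_ord_cast]; exact hw⟩
    rcases Nat.eq_zero_or_pos (ord x w) with h | h
    · exact absurd (ord_eq_zero_iff.mp h) hwx
    · exact h
  obtain ⟨ha1, ha2⟩ : 1 ≤ Nat.find hex ∧ x + ((Nat.find hex : ℕ) : ZMod n) ∉ S :=
    Nat.find_spec hex
  have haw : Nat.find hex ≤ ord x w := Nat.find_min' hex
    ⟨by rcases Nat.eq_zero_or_pos (ord x w) with h | h
        · exact absurd (ord_eq_zero_iff.mp h) hwx
        · exact h,
     by rw [add_ord_cast]; exact hw⟩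
  refine ⟨Nat.find hex, ha1, lt_of_le_of_lt haw (ord_lt x w), ?_, ha2⟩
  apply Ival_subset
  intro t ht
  rcases Nat.eq_zero_or_pos t with rfl | ht1
  · simpa using hx
  · by_contra hc
    exact absurd (Nat.find_min' hex ⟨ht1, hc⟩) (by omega)

end Ival

section Decomp
variable {n : ℕ} [NeZero n]

lemma cast_sub_one (x : ZMod n) (c : ℕ) (hc : 1 ≤ c) :
    x + (c : ZMod n) - 1 = x + ((c - 1 : ℕ) : ZMod n) := by
  have h : ((c - 1 : ℕ) : ZMod n) = (c : ZMod n) - 1 := by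
    push_cast [Nat.cast_sub hc]; ring
  rw [h]; ring

/-- The set of elements of S reachable walking right from t within S covers z. -/
lemma walk_based {S : Finset (ZMod n)} {q z : ZMod n} (hq : q ∉ S) (hz : z ∈ S) :
    ∃ t ∈ leftEnd S, ord t z < n ∧ ∀ s : ℕ, s ≤ ord t z → t + (s : ZMod n) ∈ S := by
  obtain ⟨t, htLE, h1, h2, h3⟩ := walk hq hz
  have htz : ord t z = ord q z - ord q t := ord_sub_of_le h2
  refine ⟨t, htLE, ord_lt t z, ?_⟩
  intro s hs
  have h4 : q + ((ord q t + s : ℕ) : ZMod n) ∈ S := h3 _ (by omega) (by omega)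
  have h5 : q + ((ord q t + s : ℕ) : ZMod n) = t + (s : ZMod n) := by
    push_cast
    rw [← add_assoc]
    congr 1
    exact add_ord_cast q t
  rwa [h5] at h4

lemma decomp {S : Finset (ZMod n)} (hS : S.card < n) {x y : ZMod n} (hxy : x ≠ y)
    (hLE : leftEnd S = {x, y}) :
    ∃ a b, 1 ≤ a ∧ 1 ≤ b ∧ a + 1 ≤ ord x y ∧ b + 1 ≤ n - ord x y ∧
      Disjoint (Ival x a) (Ival y b) ∧ S = Ival x a ∪ Ival y b := by
  have hx : x ∈ leftEnd S := by rw [hLE]; simp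
  have hy : y ∈ leftEnd S := by rw [hLE]; simp
  rw [mem_leftEnd_iff] at hx hy
  obtain ⟨hxS, hx1⟩ := hx
  obtain ⟨hyS, hy1⟩ := hy
  obtain ⟨a, ha1, han, haS, hagap⟩ := exists_gap hS hxS
  obtain ⟨b, hb1, hbn, hbS, hbgap⟩ := exists_gap hS hyS
  set d := ord x y with hd
  have hd1 : 1 ≤ d := by
    rcases Nat.eq_zero_or_pos d with h | h
    · exact absurd (ord_eq_zero_iff.mp h).symm hxy
    · exact h
  have hdn : d < n := ord_lt x y
  have hrev : ord y x = n - d := ord_rev hxy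
  -- y - 1 = x + (d-1)
  have hym : y - 1 = x + ((d - 1 : ℕ) : ZMod n) := by
    rw [← cast_sub_one x d hd1, add_ord_cast]
  have hxm : x - 1 = y + ((n - d - 1 : ℕ) : ZMod n) := by
    have h0 : x = y + ((n - d : ℕ) : ZMod n) := by rw [← hrev, add_ord_cast]
    rw [h0, ← cast_sub_one y (n - d) (by omega)]
  have had : a + 1 ≤ d := by
    by_contra h
    push_neg at h
    have h2 : y - 1 ∈ Ival x a := by
      rw [hym, mem_Ival_iff (le_of_lt han), ord_add_cast x (by omega)]
      omega
    exact hy1 (haS h2)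
  have hbd : b + 1 ≤ n - d := by
    by_contra h
    push_neg at h
    have h2 : x - 1 ∈ Ival y b := by
      rw [hxm, mem_Ival_iff (le_of_lt hbn), ord_add_cast y (by omega)]
      omega
    exact hx1 (hbS h2)
  have hdisj : Disjoint (Ival x a) (Ival y b) := by
    rw [Finset.disjoint_left]
    intro z hza hzb
    rw [mem_Ival_iff (le_of_lt han)] at hza
    rw [mem_Ival_iff (le_of_lt hbn)] at hzb
    have h5 : ord x z = d + ord y z := ord_add_of_lt (by omega)
    omega
  refine ⟨a, b, ha1, hb1, had, hbd, hdisj, ?_⟩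
  apply Finset.Subset.antisymm
  · intro z hz
    obtain ⟨t, htLE, htn, hts⟩ := walk_based hagap hz
    rw [hLE] at htLE
    simp only [Finset.mem_insert, Finset.mem_singleton] at htLE
    rcases htLE with rfl | rfl
    · have hlt : ord t z < a := by
        by_contra h
        push_neg at h
        exact hagap (hts a (by omega))
      exact Finset.mem_union_left _ ((mem_Ival_iff (le_of_lt han)).mpr hlt)
    · have hlt : ord t z < b := by
        by_contra h
        push_neg at h
        exact hbgap (hts b (by omega))
      exact Finset.mem_union_right _ ((mem_Ival_iff (le_of_lt hbn)).mpr hlt)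
  · exact Finset.union_subset haS hbS

end Decomp

section Forward
variable {n : ℕ} [NeZero n]

lemma leftEnd_union {x y : ZMod n} {a b : ℕ} (ha1 : 1 ≤ a) (hb1 : 1 ≤ b)
    (had : a + 1 ≤ ord x y) (hbd : b + 1 ≤ n - ord x y) :
    leftEnd (Ival x a ∪ Ival y b) = {x, y} := by
  set d := ord x y with hd
  have hdn : d < n := ord_lt x y
  have hxy : x ≠ y := by
    intro h
    rw [h, ord_self] at hd
    omega
  have hrev : ord y x = n - d := ord_rev hxy
  have han : a < n := by omega
  have hbn : b < n := by omega
  have hym : y - 1 = x + ((d - 1 : ℕ) : ZMod n) := by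
    rw [← cast_sub_one x d (by omega), add_ord_cast]
  have hxm : x - 1 = y + ((n - d - 1 : ℕ) : ZMod n) := by
    have h0 : x = y + ((n - d : ℕ) : ZMod n) := by rw [← hrev, add_ord_cast]
    rw [h0, ← cast_sub_one y (n - d) (by omega)]
  have hordyx1 : ord y (x - 1) = n - d - 1 := by rw [hxm, ord_add_cast y (by omega)]
  have hordxy1 : ord x (y - 1) = d - 1 := by rw [hym, ord_add_cast x (by omega)]
  have hneg1 : ((n - 1 : ℕ) : ZMod n) = -1 := by
    push_cast [Nat.cast_sub (by omega : 1 ≤ n)]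
    simp
  have hordxx1 : ord x (x - 1) = n - 1 := by
    have h0 : x - 1 = x + ((n - 1 : ℕ) : ZMod n) := by rw [hneg1]; ring
    rw [h0, ord_add_cast x (by omega)]
  have hordyy1 : ord y (y - 1) = n - 1 := by
    have h0 : y - 1 = y + ((n - 1 : ℕ) : ZMod n) := by rw [hneg1]; ring
    rw [h0, ord_add_cast y (by omega)]
  -- cross-order facts
  have hcross : ∀ z : ZMod n, z ∈ Ival y b → ord x z = d + ord y z := by
    intro z hz
    rw [mem_Ival_iff (le_of_lt hbn)] at hz
    exact ord_add_of_lt (by omega)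
  ext z
  simp only [mem_leftEnd_iff, Finset.mem_union, Finset.mem_insert, Finset.mem_singleton]
  constructor
  · rintro ⟨hz1 | hz1, hz2⟩
    · left
      rw [mem_Ival_iff (le_of_lt han)] at hz1
      by_contra hzx
      have hz0 : 1 ≤ ord x z := by
        rcases Nat.eq_zero_or_pos (ord x z) with h | h
        · exact absurd (ord_eq_zero_iff.mp h) hzx
        · exact h
      have hzm : z - 1 = x + ((ord x z - 1 : ℕ) : ZMod n) := by
        rw [← cast_sub_one x (ord x z) hz0, add_ord_cast]
      apply hz2
      left
      rw [hzm, mem_Ival_iff (le_of_lt han), ord_add_cast x (by omega)]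
      omega
    · right
      rw [mem_Ival_iff (le_of_lt hbn)] at hz1
      by_contra hzy
      have hz0 : 1 ≤ ord y z := by
        rcases Nat.eq_zero_or_pos (ord y z) with h | h
        · exact absurd (ord_eq_zero_iff.mp h) hzy
        · exact h
      have hzm : z - 1 = y + ((ord y z - 1 : ℕ) : ZMod n) := by
        rw [← cast_sub_one y (ord y z) hz0, add_ord_cast]
      apply hz2
      right
      rw [hzm, mem_Ival_iff (le_of_lt hbn), ord_add_cast y (by omega)]
      omega
  · rintro (rfl | rfl)
    · refine ⟨Or.inl (mem_Ival_self ha1 z), ?_⟩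
      rintro (h | h)
      · rw [mem_Ival_iff (le_of_lt han), hordxx1] at h; omega
      · rw [mem_Ival_iff (le_of_lt hbn), hordyx1] at h; omega
    · refine ⟨Or.inr (mem_Ival_self hb1 z), ?_⟩
      rintro (h | h)
      · rw [mem_Ival_iff (le_of_lt han), hordxy1] at h; omega
      · rw [mem_Ival_iff (le_of_lt hbn), hordyy1] at h; omega

lemma disjoint_Ival {x y : ZMod n} {a b : ℕ}
    (had : a + 1 ≤ ord x y) (hbd : b + 1 ≤ n - ord x y) :
    Disjoint (Ival x a) (Ival y b) := by
  have hdn : ord x y < n := ord_lt x y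
  rw [Finset.disjoint_left]
  intro z hza hzb
  rw [mem_Ival_iff (by omega : a ≤ n)] at hza
  rw [mem_Ival_iff (by omega : b ≤ n)] at hzb
  have h5 : ord x z = ord x y + ord y z := ord_add_of_lt (by omega)
  omega

lemma card_union_Ival {x y : ZMod n} {a b : ℕ}
    (had : a + 1 ≤ ord x y) (hbd : b + 1 ≤ n - ord x y) :
    (Ival x a ∪ Ival y b).card = a + b := by
  have hdn : ord x y < n := ord_lt x y
  rw [Finset.card_union_of_disjoint (disjoint_Ival had hbd),
    card_Ival (by omega : a ≤ n), card_Ival (by omega : b ≤ n)]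

end Forward

section Pairs

lemma sort_pair {a b : ℕ} (h : a < b) : ({a, b} : Finset ℕ).sort (· ≤ ·) = [a, b] := by
  rw [Finset.sort_insert]
  · rw [Finset.sort_singleton]
  · intro c hc
    simp only [Finset.mem_singleton] at hc
    omega
  · simp only [Finset.mem_singleton]; omega

lemma natIntertwines_pair {a b c d : ℕ} (h1 : a < c) (h2 : c < b) (h3 : b < d) :
    NatIntertwines {a, b} {c, d} := by
  have hab : a < b := by omega
  have hcd : c < d := by omega
  constructor
  · rw [Finset.card_pair hab.ne, Finset.card_pair hcd.ne]
  · rw [sort_pair hab, sort_pair hcd]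
    simp only [List.zip, List.zipWith, List.flatMap]
    simp [List.Chain']
    exact ⟨h1, h2, h3⟩

lemma natIntertwines_pair_elim {A B : Finset ℕ} (hA : A.card = 2) (hB : B.card = 2)
    (h : NatIntertwines A B) :
    ∃ a b c d, a ∈ A ∧ b ∈ A ∧ c ∈ B ∧ d ∈ B ∧ a < c ∧ c < b ∧ b < d := by
  obtain ⟨a, b, hab, rfl⟩ := Finset.card_eq_two.mp hA
  obtain ⟨c, d, hcd, rfl⟩ := Finset.card_eq_two.mp hB
  wlog h1 : a < b generalizing a b
  · have h2 : b < a := by omega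
    have h4 := this b a (Ne.symm hab) (by rwa [Finset.pair_comm]) (by rwa [Finset.pair_comm]) h2
    obtain ⟨a', b', c', d', m1, m2, m3, m4, o⟩ := h4
    refine ⟨a', b', c', d', ?_, ?_, m3, m4, o⟩ <;> simp only [Finset.mem_insert,
      Finset.mem_singleton] at m1 m2 ⊢ <;> tauto
  wlog h2 : c < d generalizing c d
  · have h3 : d < c := by omega
    have h4 := this d c (Ne.symm hcd) (by rwa [Finset.pair_comm]) (by rw [Finset.pair_comm d c]; exact h) h3
    obtain ⟨a', b', c', d', m1, m2, m3, m4, o⟩ := h4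
    refine ⟨a', b', c', d', m1, m2, ?_, ?_, o⟩ <;> simp only [Finset.mem_insert,
      Finset.mem_singleton] at m3 m4 ⊢ <;> tauto
  obtain ⟨_, hch⟩ := h
  rw [sort_pair h1, sort_pair h2] at hch
  simp only [List.zip, List.zipWith, List.flatMap] at hch
  simp [List.Chain'] at hch
  exact ⟨a, b, c, d, by simp, by simp, by simp, by simp, hch.1, hch.2.1, hch.2.2⟩

variable {n : ℕ} [NeZero n]

lemma image_ord_pair (i : ZMod n) (x y : ZMod n) :
    ({x, y} : Finset (ZMod n)).image (ord i) = {ord i x, ord i y} := by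
  simp [Finset.image_insert]

lemma cyc_pair_intro {i t1 t2 s1 s2 : ZMod n} (h1 : ord i t1 < ord i s1)
    (h2 : ord i s1 < ord i t2) (h3 : ord i t2 < ord i s2) :
    CycIntertwines {t1, t2} {s1, s2} := by
  refine ⟨i, ?_⟩
  rw [image_ord_pair, image_ord_pair]
  exact natIntertwines_pair h1 h2 h3

lemma cyc_pair_elim {I J : Finset (ZMod n)} (hI : I.card = 2) (hJ : J.card = 2)
    (h : CycIntertwines I J) :
    ∃ (i : ZMod n) (p q p' q' : ZMod n), p ∈ I ∧ p' ∈ I ∧ q ∈ J ∧ q' ∈ J ∧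
      ord i p < ord i q ∧ ord i q < ord i p' ∧ ord i p' < ord i q' := by
  obtain ⟨i, hN⟩ := h
  have hIc : (I.image (ord i)).card = 2 := by
    rw [Finset.card_image_of_injOn (fun x _ y _ h => ord_inj h), hI]
  have hJc : (J.image (ord i)).card = 2 := by
    rw [Finset.card_image_of_injOn (fun x _ y _ h => ord_inj h), hJ]
  obtain ⟨a, b, c, d, ha, hb, hc, hd, o1, o2, o3⟩ := natIntertwines_pair_elim hIc hJc hN
  simp only [Finset.mem_image] at ha hb hc hd
  obtain ⟨p, hp, rfl⟩ := ha
  obtain ⟨p', hp', rfl⟩ := hb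
  obtain ⟨q, hq, rfl⟩ := hc
  obtain ⟨q', hq', rfl⟩ := hd
  exact ⟨i, p, q, p', q', hp, hp', hq, hq', o1, o2, o3⟩

end Pairs

section NoCross
variable {n : ℕ} [NeZero n]

lemma pair_eq_of_card_two {T : Finset (ZMod n)} (hT : T.card = 2) {u v : ZMod n}
    (hu : u ∈ T) (hv : v ∈ T) (huv : u ≠ v) : T = {u, v} := by
  symm
  apply Finset.eq_of_subset_of_card_le
  · intro z hz
    simp only [Finset.mem_insert, Finset.mem_singleton] at hz
    rcases hz with rfl | rfl <;> assumption
  · rw [hT, Finset.card_pair huv]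

lemma no_cross_aux {S S' : Finset (ZMod n)}
    (hT : (leftEnd S).card = 2) (hT' : (leftEnd S').card = 2)
    {i p q p' q' : ZMod n} (hp : p ∈ S) (hpn : p ∉ S') (hq : q ∈ S') (hqn : q ∉ S)
    (hp' : p' ∈ S) (hp'n : p' ∉ S') (hq' : q' ∈ S') (hq'n : q' ∉ S)
    (h1 : ord i p < ord i q) (h2 : ord i q < ord i p') (h3 : ord i p' < ord i q') :
    CycIntertwines (leftEnd S) (leftEnd S') ∨ CycIntertwines (leftEnd S') (leftEnd S) := by
  -- rebase at p
  have hQ : ord p q = ord i q - ord i p := ord_sub_of_le (by omega)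
  have hP' : ord p p' = ord i p' - ord i p := ord_sub_of_le (by omega)
  have hQ' : ord p q' = ord i q' - ord i p := ord_sub_of_le (by omega)
  have hQP' : ord q p' = ord i p' - ord i q := ord_sub_of_le (by omega)
  have hP'Q' : ord p' q' = ord i q' - ord i p' := ord_sub_of_le (by omega)
  have hiq := ord_lt i q'
  have hchain : 0 < ord p q ∧ ord p q < ord p p' ∧ ord p p' < ord p q' ∧ ord p q' < n := by
    refine ⟨by omega, by omega, by omega, ord_lt p q'⟩
  -- walk 1 : s_b ∈ leftEnd S' in (p, q]
  obtain ⟨sb, hsbLE, hsb1, hsb2, -⟩ := walk hpn hq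
  -- walk 2 : t_a ∈ leftEnd S in (q, p']
  obtain ⟨ta, htaLE, hta1, hta2, -⟩ := walk hqn hp'
  -- walk 3 : s_a ∈ leftEnd S' in (p', q']
  obtain ⟨sa, hsaLE, hsa1, hsa2, -⟩ := walk hp'n hq'
  -- walk 4 : t_b ∈ leftEnd S in (q', p]
  obtain ⟨tb, htbLE, htb1, htb2, -⟩ := walk hq'n hp
  -- positions in base p
  have hfta : ord p ta = ord p q + ord q ta := ord_add_of_lt (by omega)
  have hfsa : ord p sa = ord p p' + ord p' sa := ord_add_of_lt (by omega)
  have hpq' : p ≠ q' := fun h => hpn (h ▸ hq')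
  have hrev : ord q' p = n - ord p q' := ord_rev hpq'
  have hftb : ord p tb = (ord p q' + ord q' tb) % n := ord_cocycle p tb q'
  -- distinctness
  have htane : ta ≠ tb := by
    intro h
    subst h
    rcases Nat.lt_or_ge (ord p q' + ord q' ta) n with hlt | hge
    · rw [Nat.mod_eq_of_lt hlt] at hftb; omega
    · have h6 : (ord p q' + ord q' ta) % n = ord p q' + ord q' ta - n := by
        rw [Nat.mod_eq_sub_mod hge, Nat.mod_eq_of_lt (by omega)]
      omega
  have hsane : sb ≠ sa := by
    intro h; rw [h] at hsb2; omega
  have hTeq : leftEnd S = {tb, ta} := pair_eq_of_card_two hT htbLE htaLE (Ne.symm htane)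
  have hTeq2 : leftEnd S = {ta, tb} := pair_eq_of_card_two hT htaLE htbLE htane
  have hT'eq : leftEnd S' = {sb, sa} := pair_eq_of_card_two hT' hsbLE hsaLE hsane
  rcases Nat.lt_or_ge (ord p q' + ord q' tb) n with hlt | hge
  · -- t_b strictly after q' : pattern s_b < t_a < s_a < t_b, so S' then S
    right
    rw [hTeq2, hT'eq]
    have hftb' : ord p tb = ord p q' + ord q' tb := by rw [hftb, Nat.mod_eq_of_lt hlt]
    exact cyc_pair_intro (i := p) (by omega) (by omega) (by omega)
  · -- t_b = p : pattern t_b < s_b < t_a < s_a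
    left
    rw [hTeq, hT'eq]
    have hftb' : ord p tb = 0 := by
      have h5 : ord p q' + ord q' tb = n := by omega
      rw [hftb, h5, Nat.mod_self]
    exact cyc_pair_intro (i := p) (by omega) (by omega) (by omega)

end NoCross

def loT {n : ℕ} (i : ZMod n) (T : Finset (ZMod n)) : ℕ := (T.image (ord i)).min.untopD 0
def hiT {n : ℕ} (i : ZMod n) (T : Finset (ZMod n)) : ℕ := (T.image (ord i)).max.unbotD 0

section Rep
variable {n : ℕ} [NeZero n]

lemma min_pair (u v : ℕ) : ({u, v} : Finset ℕ).min.untopD 0 = min u v := by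
  rw [Finset.min_insert, Finset.min_singleton]
  rfl

lemma max_pair (u v : ℕ) : ({u, v} : Finset ℕ).max.unbotD 0 = max u v := by
  rw [Finset.max_insert, Finset.max_singleton]
  rfl

lemma rep_spec (i : ZMod n) {T : Finset (ZMod n)} (hT : T.card = 2) :
    loT i T < hiT i T ∧ hiT i T < n ∧
      T = {i + ((loT i T : ℕ) : ZMod n), i + ((hiT i T : ℕ) : ZMod n)} := by
  obtain ⟨x, y, hxy, rfl⟩ := Finset.card_eq_two.mp hT
  have him : ({x, y} : Finset (ZMod n)).image (ord i) = {ord i x, ord i y} :=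
    image_ord_pair i x y
  have hne : ord i x ≠ ord i y := fun h => hxy (ord_inj h)
  have hlo : loT i {x, y} = min (ord i x) (ord i y) := by rw [loT, him, min_pair]
  have hhi : hiT i {x, y} = max (ord i x) (ord i y) := by rw [hiT, him, max_pair]
  refine ⟨by omega, ?_, ?_⟩
  · rw [hhi]
    rcases max_cases (ord i x) (ord i y) with ⟨h, -⟩ | ⟨h, -⟩ <;> rw [h] <;> exact ord_lt i _
  · rcases Nat.lt_or_ge (ord i x) (ord i y) with h | h
    · rw [hlo, hhi, min_eq_left h.le, max_eq_right h.le, add_ord_cast, add_ord_cast]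
    · rw [hlo, hhi, min_eq_right h, max_eq_left h, add_ord_cast, add_ord_cast,
        Finset.pair_comm]

end Rep

section Count
variable {n : ℕ} [NeZero n]

lemma phi_pair_eval (i : ZMod n) {u v : ℕ} (huv : u < v) (hv : v < n) :
    phi i {i + (u : ZMod n), i + (v : ZMod n)} = [(v + n - u - 2) % n, (u + n - v - 2) % n] := by
  have him : ({i + (u : ZMod n), i + (v : ZMod n)} : Finset (ZMod n)).image (ord i)
      = {u, v} := by
    rw [image_ord_pair, ord_add_cast i (lt_trans huv hv), ord_add_cast i hv]
  rw [phi, him, sort_pair huv]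
  rfl

lemma phi_pair_span (i : ZMod n) {u v : ℕ} (huv : u < v) (hv : v < n)
    (h2 : 2 ≤ v - u) (h3 : v - u ≤ n - 2) :
    phi i {i + (u : ZMod n), i + (v : ZMod n)} = [(v - u) - 2, n - (v - u) - 2] := by
  rw [phi_pair_eval i huv hv]
  have e1 : v + n - u - 2 = n + ((v - u) - 2) := by omega
  have e2 : u + n - v - 2 = n - (v - u) - 2 := by omega
  rw [e1, e2, Nat.add_mod_left, Nat.mod_eq_of_lt (by omega), Nat.mod_eq_of_lt (by omega)]

lemma not_mem_union_gap {x y : ZMod n} {a b : ℕ} (ha1 : 1 ≤ a)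
    (had : a + 1 ≤ ord x y) (hbd : b + 1 ≤ n - ord x y) :
    x + (a : ZMod n) ∉ Ival x a ∪ Ival y b := by
  have hdn : ord x y < n := ord_lt x y
  have hxy : x ≠ y := by
    intro h; rw [h, ord_self] at had; omega
  intro hmem
  rcases Finset.mem_union.mp hmem with h | h
  · rw [mem_Ival_iff (by omega), ord_add_cast x (by omega)] at h
    omega
  · have hyx : ord y x = n - ord x y := ord_rev hxy
    have hx : x = y + ((n - ord x y : ℕ) : ZMod n) := by rw [← hyx, add_ord_cast]
    have he : x + (a : ZMod n) = y + ((n - ord x y + a : ℕ) : ZMod n) := by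
      have hc : ((n - ord x y + a : ℕ) : ZMod n)
          = ((n - ord x y : ℕ) : ZMod n) + (a : ZMod n) := by push_cast; ring
      rw [hc, ← add_assoc, ← hx]
    rw [mem_Ival_iff (by omega), he, ord_add_cast y (by omega)] at h
    omega

lemma union_inj_aux {x y : ZMod n} {a a' b b' : ℕ} (ha1 : 1 ≤ a)
    (had : a + 1 ≤ ord x y) (hbd : b + 1 ≤ n - ord x y)
    (had' : a' + 1 ≤ ord x y)
    (h : Ival x a ∪ Ival y b = Ival x a' ∪ Ival y b') (hlt : a < a') : False := by
  have hdn : ord x y < n := ord_lt x y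
  have hmem : x + (a : ZMod n) ∈ Ival x a' :=
    (mem_Ival_iff (by omega)).mpr (by rw [ord_add_cast x (by omega)]; omega)
  exact not_mem_union_gap ha1 had hbd (h ▸ Finset.mem_union_left _ hmem)

lemma union_eq_inj {x y : ZMod n} {a a' b b' : ℕ} (ha1 : 1 ≤ a) (ha1' : 1 ≤ a')
    (had : a + 1 ≤ ord x y) (hbd : b + 1 ≤ n - ord x y)
    (had' : a' + 1 ≤ ord x y) (hbd' : b' + 1 ≤ n - ord x y)
    (h : Ival x a ∪ Ival y b = Ival x a' ∪ Ival y b') : a = a' := by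
  rcases lt_trichotomy a a' with hlt | heq | hlt
  · exact absurd (union_inj_aux ha1 had hbd had' h hlt) not_false
  · exact heq
  · exact absurd (union_inj_aux ha1' had' hbd' had h.symm hlt) not_false

lemma count_sum {k : ℕ} (hk : 2 ≤ k) (hkn : k + 2 ≤ n) :
    ∑ d ∈ Finset.Icc 2 (n - 2), ((Finset.Icc 1 (k - 1)).filter
      (fun a => a + 1 ≤ d ∧ (k - a) + 1 ≤ n - d)).card = (k - 1) * (n - k - 1) := by
  have h1 : ∀ d ∈ Finset.Icc 2 (n - 2),
      ((Finset.Icc 1 (k - 1)).filter (fun a => a + 1 ≤ d ∧ (k - a) + 1 ≤ n - d)).card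
      = ∑ a ∈ Finset.Icc 1 (k - 1), if a + 1 ≤ d ∧ (k - a) + 1 ≤ n - d then 1 else 0 :=
    fun d _ => Finset.card_filter _ _
  rw [Finset.sum_congr rfl h1, Finset.sum_comm]
  have h2 : ∀ a ∈ Finset.Icc 1 (k - 1),
      (∑ d ∈ Finset.Icc 2 (n - 2), if a + 1 ≤ d ∧ (k - a) + 1 ≤ n - d then 1 else 0)
        = n - k - 1 := by
    intro a ha
    simp only [Finset.mem_Icc] at ha
    rw [← Finset.card_filter]
    have h3 : (Finset.Icc 2 (n - 2)).filter (fun d => a + 1 ≤ d ∧ (k - a) + 1 ≤ n - d)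
        = Finset.Icc (a + 1) (a + (n - k - 1)) := by
      ext d
      simp only [Finset.mem_filter, Finset.mem_Icc]
      omega
    rw [h3, Nat.card_Icc]
    omega
  rw [Finset.sum_congr rfl h2, Finset.sum_const, Nat.card_Icc, smul_eq_mul]
  have he : k - 1 + 1 - 1 = k - 1 := by omega
  rw [he]

end Count


/-- Scott's theorem (Theorem 1 of [Scott]): for `2 ≤ k ≤ n-2`, if `𝕋` is a snake
triangulation of the convex `n`-gon — encoded by its collection of chords, a
non-crossing collection of `n-3` `2`-subsets of `[n]` forming a slice — then
`C_k(𝕋)`, the collection of `k`-subsets of `[n]` that are disjoint unions of two cyclic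
intervals whose starting points form a chord of `𝕋`, consists of `(k-1)(n-k-1)`
pairwise non-crossing `k`-subsets of `[n]`.  (Non-crossing = non-`2`-intertwining.) -/
theorem scott_snake_triangulation (n k : ℕ) (hn : 0 < n) (hk2 : 2 ≤ k) (hkn : k ≤ n - 2)
    (𝕋 : Finset (Finset (ZMod n))) (h𝕋 : IsSlice n 2 𝕋) :
    (Ck n k 𝕋).ncard = (k - 1) * (n - k - 1) ∧
      ∀ I ∈ Ck n k 𝕋, ∀ J ∈ Ck n k 𝕋, ¬ CycLIntertwines 2 I J := by
  have hn4 : 4 ≤ n := by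
    rcases Nat.lt_or_ge n 4 with h | h
    · interval_cases n <;> omega
    · exact h
  have hkn' : k + 2 ≤ n := by omega
  haveI : NeZero n := ⟨by omega⟩
  obtain ⟨hcardT, hcard2, hgap, hncr, i, hbij⟩ := h𝕋
  constructor
  · -- ===== counting part =====
    have hrep : ∀ T ∈ 𝕋, loT i T < hiT i T ∧ hiT i T < n ∧
        T = {i + ((loT i T : ℕ) : ZMod n), i + ((hiT i T : ℕ) : ZMod n)} :=
      fun T hT => rep_spec i (hcard2 T hT)
    have hmemlo : ∀ T ∈ 𝕋, i + ((loT i T : ℕ) : ZMod n) ∈ T := by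
      intro T hT
      have h := Finset.mem_insert_self (i + ((loT i T : ℕ) : ZMod n))
        ({i + ((hiT i T : ℕ) : ZMod n)} : Finset (ZMod n))
      rwa [← (hrep T hT).2.2] at h
    have hmemhi : ∀ T ∈ 𝕋, i + ((hiT i T : ℕ) : ZMod n) ∈ T := by
      intro T hT
      have h : i + ((hiT i T : ℕ) : ZMod n) ∈
          ({i + ((loT i T : ℕ) : ZMod n), i + ((hiT i T : ℕ) : ZMod n)} : Finset (ZMod n)) := by
        simp
      rwa [← (hrep T hT).2.2] at h
    -- span bounds from the gap condition
    have hspan : ∀ T ∈ 𝕋, 2 ≤ hiT i T - loT i T ∧ hiT i T - loT i T ≤ n - 2 := by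
      intro T hT
      obtain ⟨hlh, hhn, hTeq⟩ := hrep T hT
      constructor
      · by_contra h
        push_neg at h
        have hv : hiT i T = loT i T + 1 := by omega
        have he : i + ((loT i T : ℕ) : ZMod n) + 1 = i + ((hiT i T : ℕ) : ZMod n) := by
          rw [hv]; push_cast; ring
        exact hgap T hT _ (hmemlo T hT) (by rw [he]; exact hmemhi T hT)
      · by_contra h
        push_neg at h
        have hu : loT i T = 0 ∧ hiT i T = n - 1 := by omega
        have hneg1 : ((n - 1 : ℕ) : ZMod n) = -1 := by
          push_cast [Nat.cast_sub (by omega : 1 ≤ n)]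
          simp
        have he : i + ((hiT i T : ℕ) : ZMod n) + 1 = i + ((loT i T : ℕ) : ZMod n) := by
          rw [hu.1, hu.2, hneg1]; push_cast; ring
        exact hgap T hT _ (hmemhi T hT) (by rw [he]; exact hmemlo T hT)
    have hordxy : ∀ T ∈ 𝕋,
        ord (i + ((loT i T : ℕ) : ZMod n)) (i + ((hiT i T : ℕ) : ZMod n))
          = hiT i T - loT i T := by
      intro T hT
      obtain ⟨hlh, hhn, hTeq⟩ := hrep T hT
      have h1 : ord i (i + ((loT i T : ℕ) : ZMod n)) = loT i T := ord_add_cast i (by omega)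
      have h2 : ord i (i + ((hiT i T : ℕ) : ZMod n)) = hiT i T := ord_add_cast i hhn
      have h3 := ord_sub_of_le (i := i) (x := i + ((hiT i T : ℕ) : ZMod n))
        (y := i + ((loT i T : ℕ) : ZMod n)) (by rw [h1, h2]; omega)
      rw [h3, h1, h2]
    have hphiT : ∀ T ∈ 𝕋, phi i T = [(hiT i T - loT i T) - 2, n - (hiT i T - loT i T) - 2] := by
      intro T hT
      obtain ⟨hlh, hhn, hTeq⟩ := hrep T hT
      obtain ⟨hs2, hs3⟩ := hspan T hT
      conv_lhs => rw [hTeq]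
      exact phi_pair_span i hlh hhn hs2 hs3
    -- per-block membership facts
    have hblock : ∀ T ∈ 𝕋, ∀ a ∈ (Finset.Icc 1 (k - 1)).filter
        (fun a => a + 1 ≤ hiT i T - loT i T ∧ (k - a) + 1 ≤ n - (hiT i T - loT i T)),
        leftEnd (Ival (i + ((loT i T : ℕ) : ZMod n)) a ∪
            Ival (i + ((hiT i T : ℕ) : ZMod n)) (k - a)) = T ∧
          (Ival (i + ((loT i T : ℕ) : ZMod n)) a ∪
            Ival (i + ((hiT i T : ℕ) : ZMod n)) (k - a)).card = k := by
      intro T hT a ha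
      simp only [Finset.mem_filter, Finset.mem_Icc] at ha
      obtain ⟨⟨ha1, hak⟩, haS, hbS⟩ := ha
      have hb1 : 1 ≤ k - a := by omega
      have had : a + 1 ≤ ord (i + ((loT i T : ℕ) : ZMod n)) (i + ((hiT i T : ℕ) : ZMod n)) := by
        rw [hordxy T hT]; omega
      have hbd : (k - a) + 1 ≤
          n - ord (i + ((loT i T : ℕ) : ZMod n)) (i + ((hiT i T : ℕ) : ZMod n)) := by
        rw [hordxy T hT]; omega
      refine ⟨?_, ?_⟩
      · rw [leftEnd_union ha1 hb1 had hbd, ← (hrep T hT).2.2]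
      · rw [card_union_Ival had hbd]; omega
    -- Ck = F
    have hCk : Ck n k 𝕋 = ((𝕋.biUnion (fun T =>
        ((Finset.Icc 1 (k - 1)).filter
          (fun a => a + 1 ≤ hiT i T - loT i T ∧ (k - a) + 1 ≤ n - (hiT i T - loT i T))).image
          (fun a => Ival (i + ((loT i T : ℕ) : ZMod n)) a ∪
            Ival (i + ((hiT i T : ℕ) : ZMod n)) (k - a)))) :
          Finset (Finset (ZMod n))) := by
      ext S
      simp only [Ck, Set.mem_setOf_eq, Finset.coe_biUnion, Set.mem_iUnion, Finset.mem_coe,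
        Finset.mem_image]
      constructor
      · rintro ⟨hSk, hST⟩
        obtain ⟨hlh, hhn, hTeq⟩ := hrep _ hST
        have hxy : i + ((loT i (leftEnd S) : ℕ) : ZMod n)
            ≠ i + ((hiT i (leftEnd S) : ℕ) : ZMod n) := by
          intro h
          have h1 : ord i (i + ((loT i (leftEnd S) : ℕ) : ZMod n)) = loT i (leftEnd S) :=
            ord_add_cast i (by omega)
          have h2 : ord i (i + ((hiT i (leftEnd S) : ℕ) : ZMod n)) = hiT i (leftEnd S) :=
            ord_add_cast i hhn
          rw [h, h2] at h1
          omega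
        obtain ⟨a, b, ha1, hb1, had, hbd, hdisj, hSeq⟩ :=
          decomp (by omega : S.card < n) hxy hTeq
        have hab : a + b = k := by
          rw [← hSk, hSeq, card_union_Ival had hbd]
        refine ⟨leftEnd S, hST, a, ?_, ?_⟩
        · simp only [Finset.mem_filter, Finset.mem_Icc]
          rw [hordxy _ hST] at had hbd
          exact ⟨⟨ha1, by omega⟩, by omega, by omega⟩
        · have hba : k - a = b := by omega
          rw [hba]
          exact hSeq.symm
      · rintro ⟨T, hT, a, ha, rfl⟩
        obtain ⟨hLE, hcd⟩ := hblock T hT a ha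
        exact ⟨hcd, by rw [hLE]; exact hT⟩
    rw [hCk, Set.ncard_coe_finset]
    rw [Finset.card_biUnion ?hdisj]
    case hdisj =>
      intro T hT T' hT' hne
      rw [Function.onFun, Finset.disjoint_left]
      intro S hS hS'
      rw [Finset.mem_image] at hS hS'
      obtain ⟨a, ha, rfl⟩ := hS
      obtain ⟨a', ha', heq⟩ := hS'
      have e1 := (hblock T hT a ha).1
      have e2 := (hblock T' hT' a' ha').1
      rw [heq] at e2
      rw [← e1, ← e2] at hne
      exact hne rfl
    -- image cards
    have himgcard : ∀ T ∈ 𝕋,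
        (((Finset.Icc 1 (k - 1)).filter
          (fun a => a + 1 ≤ hiT i T - loT i T ∧ (k - a) + 1 ≤ n - (hiT i T - loT i T))).image
          (fun a => Ival (i + ((loT i T : ℕ) : ZMod n)) a ∪
            Ival (i + ((hiT i T : ℕ) : ZMod n)) (k - a))).card
        = ((Finset.Icc 1 (k - 1)).filter
          (fun a => a + 1 ≤ hiT i T - loT i T ∧ (k - a) + 1 ≤ n - (hiT i T - loT i T))).card := by
      intro T hT
      apply Finset.card_image_of_injOn
      intro a ha a' ha' heq
      simp only [Finset.coe_filter, Finset.mem_Icc, Set.mem_setOf_eq] at ha ha'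
      obtain ⟨⟨ha1, hak⟩, hc1, hc2⟩ := ha
      obtain ⟨⟨ha1', hak'⟩, hc1', hc2'⟩ := ha'
      have ho := hordxy T hT
      exact union_eq_inj ha1 ha1' (by omega) (by omega) (by omega) (by omega) heq
    rw [Finset.sum_congr rfl himgcard]
    -- reindex by span
    have hreidx : ∑ T ∈ 𝕋, ((Finset.Icc 1 (k - 1)).filter
        (fun a => a + 1 ≤ hiT i T - loT i T ∧ (k - a) + 1 ≤ n - (hiT i T - loT i T))).card
        = ∑ d ∈ Finset.Icc 2 (n - 2), ((Finset.Icc 1 (k - 1)).filter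
        (fun a => a + 1 ≤ d ∧ (k - a) + 1 ≤ n - d)).card := by
      apply Finset.sum_bij (fun T _ => hiT i T - loT i T)
      · intro T hT
        obtain ⟨h1, h2⟩ := hspan T hT
        simp only [Finset.mem_Icc]
        omega
      · intro T hT T' hT' heq
        have h1 := hphiT T hT
        have h2 := hphiT T' hT'
        have h3 : phi i T = phi i T' := by rw [h1, h2, heq]
        exact hbij.injOn (Finset.mem_coe.mpr hT) (Finset.mem_coe.mpr hT') h3
      · intro d hd
        simp only [Finset.mem_Icc] at hd
        have hmem : [d - 2, n - d - 2] ∈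
            {L : List ℕ | L.length = 2 ∧ L.sum = n - 2 * 2} := by
          constructor
          · rfl
          · simp only [List.sum_cons, List.sum_nil]
            omega
        obtain ⟨T, hT, hphi⟩ := hbij.surjOn hmem
        rw [Finset.mem_coe] at hT
        refine ⟨T, hT, ?_⟩
        rw [hphiT T hT] at hphi
        have hs2 := (hspan T hT).1
        have h5 := (List.cons.inj hphi).1
        omega
      · intro T hT
        rfl
    rw [hreidx]
    exact count_sum hk2 hkn'
  · -- ===== noncrossing part =====
    intro I hI J hJ hcon
    obtain ⟨hIk, hIT⟩ := hI
    obtain ⟨hJk, hJT⟩ := hJ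
    obtain ⟨I', J', hI'sub, hJ'sub, hI'c, hJ'c, hdisj⟩ := hcon
    have hTI : (leftEnd I).card = 2 := hcard2 _ hIT
    have hTJ : (leftEnd J).card = 2 := hcard2 _ hJT
    rcases hdisj with hc | hc
    · obtain ⟨j, p, q, p', q', hp, hp', hq, hq', o1, o2, o3⟩ := cyc_pair_elim hI'c hJ'c hc
      have hps := hI'sub hp
      have hp's := hI'sub hp'
      have hqs := hJ'sub hq
      have hq's := hJ'sub hq'
      rw [Finset.mem_sdiff] at hps hp's hqs hq's
      rcases no_cross_aux hTI hTJ hps.1 hps.2 hqs.1 hqs.2 hp's.1 hp's.2 hq's.1 hq's.2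
        o1 o2 o3 with h | h
      · exact hncr _ hIT _ hJT h
      · exact hncr _ hJT _ hIT h
    · obtain ⟨j, p, q, p', q', hp, hp', hq, hq', o1, o2, o3⟩ := cyc_pair_elim hJ'c hI'c hc
      have hps := hJ'sub hp
      have hp's := hJ'sub hp'
      have hqs := hI'sub hq
      have hq's := hI'sub hq'
      rw [Finset.mem_sdiff] at hps hp's hqs hq's
      rcases no_cross_aux hTJ hTI hps.1 hps.2 hqs.1 hqs.2 hp's.1 hp's.2 hq's.1 hq's.2
        o1 o2 o3 with h | h
      · exact hncr _ hJT _ hIT h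
      · exact hncr _ hIT _ hJT h
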